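/- For every q in the quaternionic unitary group Sp(n), every row index 1 ≤ j ≤ n and every column index 1 ≤ c ≤ 2n: Σ_{Z∈B} (q·Z·Z)_{j,c} = −((2n+1)/2)·q_{j,c}; moreover for all 1 ≤ j, k, α, β ≤ n: Σ_{Z∈B} (q·Z)_{j,α}·(q·Z)_{k,β} = −(1/2)·q_{k,α}·q_{j,β}, Σ_{Z∈B} (q·Z)_{j,n+α}·(q·Z)_{k,n+β} = −(1/2)·q_{k,n+α}·q_{j,n+β}, and Σ_{Z∈B} (q·Z)_{j,α}·(q·Z)_{k,n+β} = −(1/2)·q_{k,α}·q_{j,n+β}. Equivalently, the matrix coefficients z_{jα}, w_{jα} of the standard complex representation of Sp(n) satisfy τ(z_{jα}) = −((2n+1)/2)·z_{jα}, τ(w_{jα}) = −((2n+1)/2)·w_{jα}, κ(z_{jα},z_{kβ}) = −(1/2)·z_{kα}·z_{jβ}, κ(w_{jα},w_{kβ}) = −(1/2)·w_{kα}·w_{jβ}, and κ(z_{jα},w_{kβ}) = −(1/2)·z_{kα}·w_{jβ}. -/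

import Mathlib

open Matrix

/-- The matrix `E_rs` with `(r,s)`-entry `1` and all other entries `0`. -/
noncomputable def EE (n : ℕ) (r s : Fin n) : Matrix (Fin n) (Fin n) ℂ :=
  Matrix.single r s 1

/-- `X_rs = (E_rs + E_sr)/√2`. -/
noncomputable def XX (n : ℕ) (r s : Fin n) : Matrix (Fin n) (Fin n) ℂ :=
  (Real.sqrt 2 : ℂ)⁻¹ • (EE n r s + EE n s r)

/-- `Y_rs = (E_rs - E_sr)/√2`. -/
noncomputable def YY (n : ℕ) (r s : Fin n) : Matrix (Fin n) (Fin n) ℂ :=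
  (Real.sqrt 2 : ℂ)⁻¹ • (EE n r s - EE n s r)

/-- `D_r = E_rr`. -/
noncomputable def DD (n : ℕ) (r : Fin n) : Matrix (Fin n) (Fin n) ℂ :=
  Matrix.single r r 1

/-- `2n × 2n` complex matrices, written in `n × n` blocks. -/
abbrev MSp (n : ℕ) := Matrix (Fin n ⊕ Fin n) (Fin n ⊕ Fin n) ℂ

/-- The quaternionic unitary group `Sp(n)`, realised as the intersection of `U(2n)`
with the standard complex representation of `GL_n(ℍ)`. -/
def SpGroup (n : ℕ) : Set (MSp n) :=
  {q | q * q.conjTranspose = 1 ∧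
    ∃ z w : Matrix (Fin n) (Fin n) ℂ,
      q = Matrix.fromBlocks z w (-(w.map (starRingEnd ℂ))) (z.map (starRingEnd ℂ))}

/-- Basis element `(1/√2)·[[Y_rs, 0], [0, Y_rs]]` of `sp(n)`. -/
noncomputable def B1 (n : ℕ) (r s : Fin n) : MSp n :=
  (Real.sqrt 2 : ℂ)⁻¹ • Matrix.fromBlocks (YY n r s) 0 0 (YY n r s)

/-- Basis element `(1/√2)·[[iX_rs, 0], [0, -iX_rs]]` of `sp(n)`. -/
noncomputable def B2 (n : ℕ) (r s : Fin n) : MSp n :=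
  (Real.sqrt 2 : ℂ)⁻¹ •
    Matrix.fromBlocks (Complex.I • XX n r s) 0 0 (-(Complex.I • XX n r s))

/-- Basis element `(1/√2)·[[0, X_rs], [-X_rs, 0]]` of `sp(n)`. -/
noncomputable def B3 (n : ℕ) (r s : Fin n) : MSp n :=
  (Real.sqrt 2 : ℂ)⁻¹ • Matrix.fromBlocks 0 (XX n r s) (-(XX n r s)) 0

/-- Basis element `(1/√2)·[[0, iX_rs], [iX_rs, 0]]` of `sp(n)`. -/
noncomputable def B4 (n : ℕ) (r s : Fin n) : MSp n :=
  (Real.sqrt 2 : ℂ)⁻¹ •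
    Matrix.fromBlocks 0 (Complex.I • XX n r s) (Complex.I • XX n r s) 0

/-- Basis element `(1/√2)·[[0, D_r], [-D_r, 0]]` of `sp(n)`. -/
noncomputable def C1 (n : ℕ) (r : Fin n) : MSp n :=
  (Real.sqrt 2 : ℂ)⁻¹ • Matrix.fromBlocks 0 (DD n r) (-(DD n r)) 0

/-- Basis element `(1/√2)·[[0, iD_r], [iD_r, 0]]` of `sp(n)`. -/
noncomputable def C2 (n : ℕ) (r : Fin n) : MSp n :=
  (Real.sqrt 2 : ℂ)⁻¹ •
    Matrix.fromBlocks 0 (Complex.I • DD n r) (Complex.I • DD n r) 0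

/-- Basis element `(1/√2)·[[iD_r, 0], [0, -iD_r]]` of `sp(n)`. -/
noncomputable def C3 (n : ℕ) (r : Fin n) : MSp n :=
  (Real.sqrt 2 : ℂ)⁻¹ •
    Matrix.fromBlocks (Complex.I • DD n r) 0 0 (-(Complex.I • DD n r))

/-- The Laplace–Beltrami operator `τ(F)(q) = Σ_{Z ∈ B} F(q·Z·Z)` of the bi-invariant
metric on `Sp(n)`, where `B` is the canonical orthonormal basis of `sp(n)`. -/
noncomputable def tauSp (n : ℕ) (F : MSp n → ℂ) (q : MSp n) : ℂ :=
  (∑ r : Fin n, ∑ s : Fin n, if r < s then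
      F (q * B1 n r s * B1 n r s) + F (q * B2 n r s * B2 n r s)
        + F (q * B3 n r s * B3 n r s) + F (q * B4 n r s * B4 n r s)
    else 0)
  + ∑ r : Fin n, (F (q * C1 n r * C1 n r) + F (q * C2 n r * C2 n r)
      + F (q * C3 n r * C3 n r))

/-- The conformality operator `κ(F,G)(q) = Σ_{Z ∈ B} F(q·Z)·G(q·Z)` on `Sp(n)`. -/
noncomputable def kappaSp (n : ℕ) (F G : MSp n → ℂ) (q : MSp n) : ℂ :=
  (∑ r : Fin n, ∑ s : Fin n, if r < s then
      F (q * B1 n r s) * G (q * B1 n r s) + F (q * B2 n r s) * G (q * B2 n r s)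
        + F (q * B3 n r s) * G (q * B3 n r s) + F (q * B4 n r s) * G (q * B4 n r s)
    else 0)
  + ∑ r : Fin n, (F (q * C1 n r) * G (q * C1 n r) + F (q * C2 n r) * G (q * C2 n r)
      + F (q * C3 n r) * G (q * C3 n r))


section Aux

lemma s2s2 : ((Real.sqrt 2 : ℝ) : ℂ)⁻¹ * ((Real.sqrt 2 : ℝ) : ℂ)⁻¹ = 2⁻¹ := by
  rw [← mul_inv, ← Complex.ofReal_mul, Real.mul_self_sqrt (by norm_num)]
  norm_num

lemma rt2rt2 : ((Real.sqrt 2 : ℝ) : ℂ) * ((Real.sqrt 2 : ℝ) : ℂ) = 2 := by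
  rw [← Complex.ofReal_mul, Real.mul_self_sqrt (by norm_num)]; norm_num

lemma s2_two : ((Real.sqrt 2 : ℝ) : ℂ)⁻¹ * 2 = ((Real.sqrt 2 : ℝ) : ℂ) := by
  have h2 := rt2rt2
  have h : ((Real.sqrt 2 : ℝ) : ℂ) ≠ 0 := by
    intro h0
    rw [h0, zero_mul] at h2
    exact two_ne_zero h2.symm
  rw [inv_mul_eq_div, div_eq_iff h]
  linear_combination -h2

lemma EE_apply (n : ℕ) (r s a b : Fin n) :
    EE n r s a b = if r = a ∧ s = b then 1 else 0 := by
  simp [EE, Matrix.single]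

lemma sum_EE_diag (n : ℕ) : ∑ r : Fin n, EE n r r = 1 := by
  ext a b
  by_cases h : a = b
  · subst h; simp [Matrix.sum_apply, EE_apply, Matrix.one_apply, Finset.filter_eq']
  · simp only [Matrix.sum_apply, EE_apply, Matrix.one_apply, h, if_neg h]
    rw [Finset.sum_eq_zero]
    · simp [h]
    · rintro x -
      rw [if_neg]
      rintro ⟨rfl, rfl⟩
      exact h rfl

lemma EE_mul (n : ℕ) (r s t u : Fin n) :
    EE n r s * EE n t u = if s = t then EE n r u else 0 := by
  ext a b
  simp only [Matrix.mul_apply, EE_apply]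
  by_cases h : s = t
  · subst h
    simp only [if_pos rfl]
    rw [Finset.sum_eq_single s]
    · by_cases h1 : r = a <;> by_cases h2 : u = b <;> simp [h1, h2, EE_apply]
    · intro c _ hc
      rw [if_neg, zero_mul]
      rintro ⟨rfl, rfl⟩; exact hc rfl
    · simp
  · simp only [if_neg h, Matrix.zero_apply]
    rw [Finset.sum_eq_zero]
    rintro c -
    rcases eq_or_ne s c with rfl | hc
    · rw [if_neg (show ¬(t = s ∧ u = b) from fun hh => h hh.1.symm), mul_zero]
    · rw [if_neg (show ¬(r = a ∧ s = c) from fun hh => hc hh.2), zero_mul]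

lemma XX_sq (n : ℕ) (r s : Fin n) : XX n r s * XX n r s
    = (2:ℂ)⁻¹ • (EE n r r + EE n s s) + (if r = s then EE n r r else 0) := by
  rw [XX, Matrix.smul_mul, Matrix.mul_smul, smul_smul, s2s2]
  rw [add_mul, mul_add, mul_add, EE_mul, EE_mul, EE_mul, EE_mul]
  rcases eq_or_ne r s with rfl | h
  · simp only [if_pos rfl, eq_self_iff_true, if_true]
    module
  · simp only [if_neg h, if_neg (Ne.symm h), eq_self_iff_true, if_true]
    module

lemma YY_sq (n : ℕ) (r s : Fin n) : YY n r s * YY n r s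
    = -((2:ℂ)⁻¹ • (EE n r r + EE n s s)) + (if r = s then EE n r r else 0) := by
  rw [YY, Matrix.smul_mul, Matrix.mul_smul, smul_smul, s2s2]
  rw [sub_mul, mul_sub, mul_sub, EE_mul, EE_mul, EE_mul, EE_mul]
  rcases eq_or_ne r s with rfl | h
  · simp only [if_pos rfl, eq_self_iff_true, if_true]
    module
  · simp only [if_neg h, if_neg (Ne.symm h), eq_self_iff_true, if_true]
    module

lemma Bsq (n : ℕ) (r s : Fin n) :
    B1 n r s * B1 n r s + B2 n r s * B2 n r s + B3 n r s * B3 n r s + B4 n r s * B4 n r s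
    = -(Matrix.fromBlocks (EE n r r + EE n s s + (if r = s then EE n r r else 0)) 0 0
        (EE n r r + EE n s s + (if r = s then EE n r r else 0))) := by
  simp only [B1, B2, B3, B4, Matrix.smul_mul, Matrix.mul_smul, smul_smul, s2s2,
    Matrix.fromBlocks_multiply, Matrix.mul_zero, Matrix.zero_mul, add_zero, zero_add,
    Matrix.neg_mul, Matrix.mul_neg, neg_neg, Complex.I_mul_I, neg_smul, one_smul,
    XX_sq, YY_sq, smul_zero, smul_neg, neg_zero]
  simp only [Matrix.fromBlocks_smul, Matrix.fromBlocks_add, Matrix.fromBlocks_neg]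
  rw [Matrix.fromBlocks_inj]
  refine ⟨?_, by simp, by simp, ?_⟩ <;> module

lemma XX_swap (n : ℕ) (r s : Fin n) : XX n s r = XX n r s := by
  rw [XX, XX, add_comm]

lemma YY_swap (n : ℕ) (r s : Fin n) : YY n s r = -YY n r s := by
  rw [YY, YY, ← smul_neg, neg_sub]

lemma B1_swap (n : ℕ) (r s : Fin n) : B1 n s r = -B1 n r s := by
  rw [B1, B1, YY_swap, ← smul_neg, Matrix.fromBlocks_neg, neg_zero]

lemma B2_swap (n : ℕ) (r s : Fin n) : B2 n s r = B2 n r s := by rw [B2, B2, XX_swap]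
lemma B3_swap (n : ℕ) (r s : Fin n) : B3 n s r = B3 n r s := by rw [B3, B3, XX_swap]
lemma B4_swap (n : ℕ) (r s : Fin n) : B4 n s r = B4 n r s := by rw [B4, B4, XX_swap]

lemma XX_diag (n : ℕ) (r : Fin n) : XX n r r = ((Real.sqrt 2 : ℝ) : ℂ) • DD n r := by
  have hE : EE n r r = DD n r := rfl
  rw [XX, hE, ← two_smul ℂ (DD n r), smul_smul, s2_two]

lemma B1_diag (n : ℕ) (r : Fin n) : B1 n r r = 0 := by
  rw [B1, YY, sub_self, smul_zero]
  simp

lemma B2_diag (n : ℕ) (r : Fin n) : B2 n r r = ((Real.sqrt 2 : ℝ) : ℂ) • C3 n r := by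
  rw [B2, C3, XX_diag]
  simp only [Matrix.fromBlocks_smul, smul_zero, smul_neg, smul_smul]
  rw [Matrix.fromBlocks_inj]
  refine ⟨?_, ?_, ?_, ?_⟩ <;> module

lemma B3_diag (n : ℕ) (r : Fin n) : B3 n r r = ((Real.sqrt 2 : ℝ) : ℂ) • C1 n r := by
  rw [B3, C1, XX_diag]
  simp only [Matrix.fromBlocks_smul, smul_zero, smul_neg, smul_smul]
  rw [Matrix.fromBlocks_inj]
  refine ⟨?_, ?_, ?_, ?_⟩ <;> module

lemma B4_diag (n : ℕ) (r : Fin n) : B4 n r r = ((Real.sqrt 2 : ℝ) : ℂ) • C2 n r := by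
  rw [B4, C2, XX_diag]
  simp only [Matrix.fromBlocks_smul, smul_zero, smul_neg, smul_smul]
  rw [Matrix.fromBlocks_inj]
  refine ⟨?_, ?_, ?_, ?_⟩ <;> module

lemma half_sum {n : ℕ} (f : Fin n → Fin n → ℂ) (g : Fin n → ℂ)
    (hsymm : ∀ r s, f s r = f r s) (hdiag : ∀ r, f r r = 2 * g r) :
    ((∑ r : Fin n, ∑ s : Fin n, if r < s then f r s else 0) + ∑ r : Fin n, g r)
      = 2⁻¹ * ∑ r : Fin n, ∑ s : Fin n, f r s := by
  have key : ∀ r s : Fin n, f r s =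
      (if r < s then f r s else 0) + (if s < r then f r s else 0)
        + (if r = s then f r s else 0) := by
    intro r s
    rcases lt_trichotomy r s with h | h | h
    · rw [if_pos h, if_neg (asymm h), if_neg h.ne, add_zero, add_zero]
    · subst h; simp [lt_irrefl]
    · rw [if_neg (asymm h), if_pos h, if_neg h.ne', zero_add, add_zero]
  have h1 : ∑ r : Fin n, ∑ s : Fin n, f r s
      = (∑ r : Fin n, ∑ s : Fin n, if r < s then f r s else 0)
        + (∑ r : Fin n, ∑ s : Fin n, if s < r then f r s else 0)
        + (∑ r : Fin n, ∑ s : Fin n, if r = s then f r s else 0) := by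
    rw [← Finset.sum_add_distrib, ← Finset.sum_add_distrib]
    refine Finset.sum_congr rfl fun r _ => ?_
    rw [← Finset.sum_add_distrib, ← Finset.sum_add_distrib]
    exact Finset.sum_congr rfl fun s _ => key r s
  have h2 : (∑ r : Fin n, ∑ s : Fin n, if s < r then f r s else 0)
      = ∑ r : Fin n, ∑ s : Fin n, if r < s then f r s else 0 := by
    rw [Finset.sum_comm]
    exact Finset.sum_congr rfl fun s _ => Finset.sum_congr rfl fun r _ => by
      rcases lt_or_ge s r with h | h
      · rw [if_pos h, if_pos h, hsymm]
      · rw [if_neg (not_lt.mpr h), if_neg (not_lt.mpr h)]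
  have h3 : (∑ r : Fin n, ∑ s : Fin n, if r = s then f r s else 0) = 2 * ∑ r : Fin n, g r := by
    rw [Finset.mul_sum]
    refine Finset.sum_congr rfl fun r _ => ?_
    rw [Finset.sum_ite_eq, if_pos (Finset.mem_univ r), hdiag]
  rw [h2, h3] at h1
  rw [h1]; ring

lemma s2_scal (x : ℂ) :
    ((Real.sqrt 2 : ℝ) : ℂ)⁻¹ * (x * ((Real.sqrt 2 : ℝ) : ℂ)⁻¹) = 2⁻¹ * x := by
  linear_combination x * s2s2

lemma s2_scal_I (x : ℂ) :
    ((Real.sqrt 2 : ℝ) : ℂ)⁻¹ * (x * (Complex.I * ((Real.sqrt 2 : ℝ) : ℂ)⁻¹)) =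
      2⁻¹ * Complex.I * x := by
  linear_combination x * Complex.I * s2s2

lemma mul_smul_fromBlocks_inl {n : ℕ} (q : MSp n) (c : ℂ)
    (A B C D : Matrix (Fin n) (Fin n) ℂ) (i : Fin n ⊕ Fin n) (α : Fin n) :
    (q * (c • Matrix.fromBlocks A B C D)) i (Sum.inl α)
      = c * ((∑ a, q i (Sum.inl a) * A a α) + ∑ a, q i (Sum.inr a) * C a α) := by
  rw [Matrix.mul_smul, Matrix.smul_apply, smul_eq_mul, Matrix.mul_apply, Fintype.sum_sum_type]
  simp [Matrix.fromBlocks]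

lemma mul_smul_fromBlocks_inr {n : ℕ} (q : MSp n) (c : ℂ)
    (A B C D : Matrix (Fin n) (Fin n) ℂ) (i : Fin n ⊕ Fin n) (α : Fin n) :
    (q * (c • Matrix.fromBlocks A B C D)) i (Sum.inr α)
      = c * ((∑ a, q i (Sum.inl a) * B a α) + ∑ a, q i (Sum.inr a) * D a α) := by
  rw [Matrix.mul_smul, Matrix.smul_apply, smul_eq_mul, Matrix.mul_apply, Fintype.sum_sum_type]
  simp [Matrix.fromBlocks]

lemma qB1_inl {n : ℕ} (q : MSp n) (r s : Fin n) (i : Fin n ⊕ Fin n) (α : Fin n) :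
    (q * B1 n r s) i (Sum.inl α)
      = 2⁻¹ * ((if s = α then q i (Sum.inl r) else 0) - (if r = α then q i (Sum.inl s) else 0)) := by
  rw [B1, mul_smul_fromBlocks_inl]
  simp only [YY, Matrix.smul_apply, Matrix.sub_apply, EE_apply, smul_eq_mul,
    Matrix.zero_apply, mul_zero, Finset.sum_const_zero, add_zero, ite_and, mul_sub,
    mul_ite, mul_one, Finset.sum_sub_distrib, Finset.sum_ite_eq, Finset.mem_univ, if_true,
    s2_scal]

lemma qB1_inr {n : ℕ} (q : MSp n) (r s : Fin n) (i : Fin n ⊕ Fin n) (α : Fin n) :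
    (q * B1 n r s) i (Sum.inr α)
      = 2⁻¹ * ((if s = α then q i (Sum.inr r) else 0) - (if r = α then q i (Sum.inr s) else 0)) := by
  rw [B1, mul_smul_fromBlocks_inr]
  simp only [YY, Matrix.smul_apply, Matrix.sub_apply, EE_apply, smul_eq_mul,
    Matrix.zero_apply, mul_zero, Finset.sum_const_zero, zero_add, ite_and, mul_sub,
    mul_ite, mul_one, Finset.sum_sub_distrib, Finset.sum_ite_eq, Finset.mem_univ, if_true,
    s2_scal]

lemma qB2_inl {n : ℕ} (q : MSp n) (r s : Fin n) (i : Fin n ⊕ Fin n) (α : Fin n) :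
    (q * B2 n r s) i (Sum.inl α)
      = 2⁻¹ * Complex.I *
          ((if s = α then q i (Sum.inl r) else 0) + (if r = α then q i (Sum.inl s) else 0)) := by
  rw [B2, mul_smul_fromBlocks_inl]
  simp only [XX, Matrix.smul_apply, Matrix.add_apply, EE_apply, smul_eq_mul,
    Matrix.zero_apply, mul_zero, Finset.sum_const_zero, add_zero, ite_and, mul_add,
    mul_ite, mul_one, Finset.sum_add_distrib, Finset.sum_ite_eq, Finset.mem_univ, if_true,
    s2_scal_I]

lemma qB2_inr {n : ℕ} (q : MSp n) (r s : Fin n) (i : Fin n ⊕ Fin n) (α : Fin n) :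
    (q * B2 n r s) i (Sum.inr α)
      = -(2⁻¹ * Complex.I *
          ((if s = α then q i (Sum.inr r) else 0) + (if r = α then q i (Sum.inr s) else 0))) := by
  rw [B2, mul_smul_fromBlocks_inr]
  simp only [XX, Matrix.neg_apply, Matrix.smul_apply, Matrix.add_apply, EE_apply, smul_eq_mul,
    Matrix.zero_apply, mul_zero, Finset.sum_const_zero, zero_add, ite_and, mul_add, mul_neg,
    neg_mul, neg_neg, neg_add, mul_ite, mul_one, neg_zero, Finset.sum_add_distrib,
    Finset.sum_neg_distrib, Finset.sum_ite_eq, Finset.mem_univ, if_true, s2_scal_I]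

lemma qB3_inl {n : ℕ} (q : MSp n) (r s : Fin n) (i : Fin n ⊕ Fin n) (α : Fin n) :
    (q * B3 n r s) i (Sum.inl α)
      = -(2⁻¹ *
          ((if s = α then q i (Sum.inr r) else 0) + (if r = α then q i (Sum.inr s) else 0))) := by
  rw [B3, mul_smul_fromBlocks_inl]
  simp only [XX, Matrix.neg_apply, Matrix.smul_apply, Matrix.add_apply, EE_apply, smul_eq_mul,
    Matrix.zero_apply, mul_zero, Finset.sum_const_zero, zero_add, ite_and, mul_add, mul_neg,
    neg_mul, neg_neg, neg_add, mul_ite, mul_one, neg_zero, Finset.sum_add_distrib,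
    Finset.sum_neg_distrib, Finset.sum_ite_eq, Finset.mem_univ, if_true, s2_scal]

lemma qB3_inr {n : ℕ} (q : MSp n) (r s : Fin n) (i : Fin n ⊕ Fin n) (α : Fin n) :
    (q * B3 n r s) i (Sum.inr α)
      = 2⁻¹ *
          ((if s = α then q i (Sum.inl r) else 0) + (if r = α then q i (Sum.inl s) else 0)) := by
  rw [B3, mul_smul_fromBlocks_inr]
  simp only [XX, Matrix.smul_apply, Matrix.add_apply, EE_apply, smul_eq_mul,
    Matrix.zero_apply, mul_zero, Finset.sum_const_zero, add_zero, ite_and, mul_add,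
    mul_ite, mul_one, Finset.sum_add_distrib, Finset.sum_ite_eq, Finset.mem_univ, if_true,
    s2_scal]

lemma qB4_inl {n : ℕ} (q : MSp n) (r s : Fin n) (i : Fin n ⊕ Fin n) (α : Fin n) :
    (q * B4 n r s) i (Sum.inl α)
      = 2⁻¹ * Complex.I *
          ((if s = α then q i (Sum.inr r) else 0) + (if r = α then q i (Sum.inr s) else 0)) := by
  rw [B4, mul_smul_fromBlocks_inl]
  simp only [XX, Matrix.smul_apply, Matrix.add_apply, EE_apply, smul_eq_mul,
    Matrix.zero_apply, mul_zero, Finset.sum_const_zero, zero_add, ite_and, mul_add,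
    mul_ite, mul_one, Finset.sum_add_distrib, Finset.sum_ite_eq, Finset.mem_univ, if_true,
    s2_scal_I]

lemma qB4_inr {n : ℕ} (q : MSp n) (r s : Fin n) (i : Fin n ⊕ Fin n) (α : Fin n) :
    (q * B4 n r s) i (Sum.inr α)
      = 2⁻¹ * Complex.I *
          ((if s = α then q i (Sum.inl r) else 0) + (if r = α then q i (Sum.inl s) else 0)) := by
  rw [B4, mul_smul_fromBlocks_inr]
  simp only [XX, Matrix.smul_apply, Matrix.add_apply, EE_apply, smul_eq_mul,
    Matrix.zero_apply, mul_zero, Finset.sum_const_zero, add_zero, ite_and, mul_add,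
    mul_ite, mul_one, Finset.sum_add_distrib, Finset.sum_ite_eq, Finset.mem_univ, if_true,
    s2_scal_I]

lemma hp1 (x y : ℂ) : (2⁻¹ * x) * (2⁻¹ * y) = 4⁻¹ * (x*y) := by ring
lemma hp2 (x y : ℂ) : (2⁻¹ * Complex.I * x) * (2⁻¹ * Complex.I * y) = -(4⁻¹ * (x*y)) := by
  linear_combination (4⁻¹ * x * y) * Complex.I_mul_I
lemma hp3 (x y : ℂ) : (-(2⁻¹ * x)) * (-(2⁻¹ * y)) = 4⁻¹ * (x*y) := by ring
lemma hp4 (x y : ℂ) : (-(2⁻¹ * Complex.I * x)) * (-(2⁻¹ * Complex.I * y)) = -(4⁻¹ * (x*y)) := by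
  linear_combination (4⁻¹ * x * y) * Complex.I_mul_I
lemma hp5 (x y : ℂ) : (2⁻¹ * Complex.I * x) * (-(2⁻¹ * Complex.I * y)) = 4⁻¹ * (x*y) := by
  linear_combination (-(4⁻¹ * x * y)) * Complex.I_mul_I
lemma hp6 (x y : ℂ) : (-(2⁻¹ * x)) * (2⁻¹ * y) = -(4⁻¹ * (x*y)) := by ring
lemma hq2 (x y : ℂ) :
    (((Real.sqrt 2 : ℝ) : ℂ) * x) * (((Real.sqrt 2 : ℝ) : ℂ) * y) = 2 * (x * y) := by
  linear_combination (x * y) * rt2rt2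

lemma sum_fromBlocks_diag {n : ℕ} (f : Fin n → Matrix (Fin n) (Fin n) ℂ) :
    ∑ i : Fin n, (Matrix.fromBlocks (f i) 0 0 (f i) : MSp n)
      = Matrix.fromBlocks (∑ i : Fin n, f i) 0 0 (∑ i : Fin n, f i) := by
  ext a b
  rcases a with a | a <;> rcases b with b | b <;>
    simp [Matrix.sum_apply, Matrix.fromBlocks]

lemma sumP (n : ℕ) :
    ∑ r : Fin n, ∑ s : Fin n,
        (EE n r r + EE n s s + (if r = s then EE n r r else 0))
      = (2 * (n : ℂ) + 1) • (1 : Matrix (Fin n) (Fin n) ℂ) := by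
  have h1 : ∀ r : Fin n, ∑ s : Fin n, (EE n r r + EE n s s + if r = s then EE n r r else 0)
      = (n : ℂ) • EE n r r + (1 : Matrix (Fin n) (Fin n) ℂ) + EE n r r := by
    intro r
    rw [Finset.sum_add_distrib, Finset.sum_add_distrib, Finset.sum_const, sum_EE_diag,
      Finset.sum_ite_eq, if_pos (Finset.mem_univ r), Finset.card_univ, Fintype.card_fin,
      Nat.cast_smul_eq_nsmul ℂ]
  rw [Finset.sum_congr rfl (fun r _ => h1 r), Finset.sum_add_distrib, Finset.sum_add_distrib,
    ← Finset.smul_sum, sum_EE_diag, Finset.sum_const, Finset.card_univ, Fintype.card_fin]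
  rw [← Nat.cast_smul_eq_nsmul ℂ n (1 : Matrix (Fin n) (Fin n) ℂ)]
  module

lemma key_orth {n : ℕ} (q : MSp n) (hq : q ∈ SpGroup n) (j k : Fin n) :
    ∑ a : Fin n, q (Sum.inl j) (Sum.inl a) * q (Sum.inl k) (Sum.inr a)
      = ∑ a : Fin n, q (Sum.inl j) (Sum.inr a) * q (Sum.inl k) (Sum.inl a) := by
  obtain ⟨hu, z, w, hzw⟩ := hq
  subst hzw
  have h0 : ((Matrix.fromBlocks z w (-(w.map (starRingEnd ℂ))) (z.map (starRingEnd ℂ))) *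
      (Matrix.fromBlocks z w (-(w.map (starRingEnd ℂ)))
        (z.map (starRingEnd ℂ))).conjTranspose) (Sum.inl j) (Sum.inr k) = 0 := by
    rw [hu]; simp [Matrix.one_apply]
  rw [Matrix.mul_apply, Fintype.sum_sum_type] at h0
  simp only [Matrix.conjTranspose_apply, Matrix.fromBlocks_apply₁₁, Matrix.fromBlocks_apply₁₂,
    Matrix.fromBlocks_apply₂₁, Matrix.fromBlocks_apply₂₂, Matrix.map_apply, Matrix.neg_apply,
    star_neg, Complex.star_def, Complex.conj_conj, mul_neg, neg_mul,
    Finset.sum_neg_distrib] at h0 ⊢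
  linear_combination -h0

end Aux

/-- Lemma 8.1: the matrix coefficients `z_{jα} = q_{j,α}` and `w_{jα} = q_{j,n+α}` of
the standard complex representation of `Sp(n)` satisfy
`τ(z_{jα}) = -((2n+1)/2)·z_{jα}`, `τ(w_{jα}) = -((2n+1)/2)·w_{jα}`,
`κ(z_{jα}, z_{kβ}) = -(1/2)·z_{kα}·z_{jβ}`, `κ(w_{jα}, w_{kβ}) = -(1/2)·w_{kα}·w_{jβ}`
and `κ(z_{jα}, w_{kβ}) = -(1/2)·z_{kα}·w_{jβ}`. -/
theorem stmt_13 (n : ℕ) (hn : 0 < n) (q : MSp n) (hq : q ∈ SpGroup n) :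
    (∀ (j : Fin n) (c : Fin n ⊕ Fin n),
      tauSp n (fun M => M (Sum.inl j) c) q
        = -((2 * (n : ℂ) + 1) / 2) * q (Sum.inl j) c) ∧
    (∀ j k α β : Fin n,
      kappaSp n (fun M => M (Sum.inl j) (Sum.inl α))
          (fun M => M (Sum.inl k) (Sum.inl β)) q
        = -(1 / 2 : ℂ) * (q (Sum.inl k) (Sum.inl α) * q (Sum.inl j) (Sum.inl β)) ∧
      kappaSp n (fun M => M (Sum.inl j) (Sum.inr α))
          (fun M => M (Sum.inl k) (Sum.inr β)) q
        = -(1 / 2 : ℂ) * (q (Sum.inl k) (Sum.inr α) * q (Sum.inl j) (Sum.inr β)) ∧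
      kappaSp n (fun M => M (Sum.inl j) (Sum.inl α))
          (fun M => M (Sum.inl k) (Sum.inr β)) q
        = -(1 / 2 : ℂ) * (q (Sum.inl k) (Sum.inl α) * q (Sum.inl j) (Sum.inr β))) := by
  constructor
  · intro j c
    simp only [tauSp]
    have e1 := half_sum
      (f := fun r s => (q * B1 n r s * B1 n r s) (Sum.inl j) c
        + (q * B2 n r s * B2 n r s) (Sum.inl j) c
        + (q * B3 n r s * B3 n r s) (Sum.inl j) c
        + (q * B4 n r s * B4 n r s) (Sum.inl j) c)
      (g := fun r => (q * C1 n r * C1 n r) (Sum.inl j) c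
        + (q * C2 n r * C2 n r) (Sum.inl j) c
        + (q * C3 n r * C3 n r) (Sum.inl j) c)
      (by
        intro r s
        beta_reduce
        rw [B1_swap n r s, B2_swap n r s, B3_swap n r s, B4_swap n r s]
        simp only [Matrix.mul_neg, Matrix.neg_mul, neg_neg])
      (by
        intro r
        beta_reduce
        rw [B1_diag n r, B2_diag n r, B3_diag n r, B4_diag n r]
        simp only [Matrix.mul_zero, Matrix.zero_mul, Matrix.zero_apply, Matrix.mul_smul,
          Matrix.smul_mul, smul_smul, Matrix.smul_apply, smul_eq_mul, ← mul_assoc, rt2rt2]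
        ring)
    rw [e1]
    have hterm : ∀ r s : Fin n,
        (q * B1 n r s * B1 n r s) (Sum.inl j) c + (q * B2 n r s * B2 n r s) (Sum.inl j) c
          + (q * B3 n r s * B3 n r s) (Sum.inl j) c + (q * B4 n r s * B4 n r s) (Sum.inl j) c
        = -((q * Matrix.fromBlocks (EE n r r + EE n s s + (if r = s then EE n r r else 0)) 0 0
            (EE n r r + EE n s s + (if r = s then EE n r r else 0))) (Sum.inl j) c) := by
      intro r s
      simp only [mul_assoc, ← Matrix.add_apply, ← Matrix.mul_add]
      rw [Bsq, Matrix.mul_neg, Matrix.neg_apply]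
    rw [Finset.sum_congr rfl fun r _ => Finset.sum_congr rfl fun s _ => hterm r s]
    have h2 : (∑ r : Fin n, ∑ s : Fin n,
        -((q * Matrix.fromBlocks (EE n r r + EE n s s + (if r = s then EE n r r else 0)) 0 0
            (EE n r r + EE n s s + (if r = s then EE n r r else 0))) (Sum.inl j) c))
        = -((q * ∑ r : Fin n, ∑ s : Fin n,
            Matrix.fromBlocks (EE n r r + EE n s s + (if r = s then EE n r r else 0)) 0 0
              (EE n r r + EE n s s + (if r = s then EE n r r else 0))) (Sum.inl j) c) := by
      simp only [Matrix.mul_sum, Matrix.sum_apply, Finset.sum_neg_distrib]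
    rw [h2, Finset.sum_congr rfl fun r (_ : r ∈ Finset.univ) =>
      sum_fromBlocks_diag (fun s => EE n r r + EE n s s + (if r = s then EE n r r else 0)),
      sum_fromBlocks_diag (fun r => ∑ s : Fin n,
        (EE n r r + EE n s s + (if r = s then EE n r r else 0))), sumP]
    have hb : Matrix.fromBlocks ((2 * (n : ℂ) + 1) • (1 : Matrix (Fin n) (Fin n) ℂ)) 0 0
        ((2 * (n : ℂ) + 1) • (1 : Matrix (Fin n) (Fin n) ℂ)) = (2 * (n : ℂ) + 1) • (1 : MSp n) := by
      rw [← Matrix.fromBlocks_one (l := Fin n) (m := Fin n) (α := ℂ), Matrix.fromBlocks_smul,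
        smul_zero]
    rw [hb, Matrix.mul_smul, Matrix.mul_one, Matrix.smul_apply, smul_eq_mul]
    ring
  · intro j k α β
    have horth := key_orth q hq j k
    refine ⟨?_, ?_, ?_⟩
    · simp only [kappaSp]
      have e1 := half_sum
        (f := fun r s => (q * B1 n r s) (Sum.inl j) (Sum.inl α) * (q * B1 n r s) (Sum.inl k) (Sum.inl β)
          + (q * B2 n r s) (Sum.inl j) (Sum.inl α) * (q * B2 n r s) (Sum.inl k) (Sum.inl β)
          + (q * B3 n r s) (Sum.inl j) (Sum.inl α) * (q * B3 n r s) (Sum.inl k) (Sum.inl β)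
          + (q * B4 n r s) (Sum.inl j) (Sum.inl α) * (q * B4 n r s) (Sum.inl k) (Sum.inl β))
        (g := fun r => (q * C1 n r) (Sum.inl j) (Sum.inl α) * (q * C1 n r) (Sum.inl k) (Sum.inl β)
          + (q * C2 n r) (Sum.inl j) (Sum.inl α) * (q * C2 n r) (Sum.inl k) (Sum.inl β)
          + (q * C3 n r) (Sum.inl j) (Sum.inl α) * (q * C3 n r) (Sum.inl k) (Sum.inl β))
        (by
          intro r s
          beta_reduce
          rw [B1_swap n r s, B2_swap n r s, B3_swap n r s, B4_swap n r s]
          simp only [Matrix.mul_neg, Matrix.neg_apply, neg_mul_neg])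
        (by
          intro r
          beta_reduce
          rw [B1_diag n r, B2_diag n r, B3_diag n r, B4_diag n r]
          simp only [Matrix.mul_zero, Matrix.zero_apply, zero_mul, Matrix.mul_smul,
            Matrix.smul_apply, smul_eq_mul, hq2]
          ring)
      rw [e1]
      simp only [qB1_inl, qB2_inl, qB3_inl, qB4_inl, hp1, hp2, hp3, hp4, hp5, hp6]
      simp only [mul_sub, sub_mul, mul_add, add_mul, mul_ite, ite_mul, mul_zero, zero_mul,
        mul_one, neg_mul, mul_neg, neg_neg, neg_zero, ite_self, neg_add, neg_sub,
        Finset.sum_add_distrib, Finset.sum_sub_distrib, Finset.sum_neg_distrib,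
        Finset.sum_ite_irrel, Finset.sum_ite_eq', Finset.sum_ite_eq, Finset.mem_univ, if_true,
        Finset.sum_const_zero]
      split_ifs with h <;> ring
    · simp only [kappaSp]
      have e1 := half_sum
        (f := fun r s => (q * B1 n r s) (Sum.inl j) (Sum.inr α) * (q * B1 n r s) (Sum.inl k) (Sum.inr β)
          + (q * B2 n r s) (Sum.inl j) (Sum.inr α) * (q * B2 n r s) (Sum.inl k) (Sum.inr β)
          + (q * B3 n r s) (Sum.inl j) (Sum.inr α) * (q * B3 n r s) (Sum.inl k) (Sum.inr β)
          + (q * B4 n r s) (Sum.inl j) (Sum.inr α) * (q * B4 n r s) (Sum.inl k) (Sum.inr β))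
        (g := fun r => (q * C1 n r) (Sum.inl j) (Sum.inr α) * (q * C1 n r) (Sum.inl k) (Sum.inr β)
          + (q * C2 n r) (Sum.inl j) (Sum.inr α) * (q * C2 n r) (Sum.inl k) (Sum.inr β)
          + (q * C3 n r) (Sum.inl j) (Sum.inr α) * (q * C3 n r) (Sum.inl k) (Sum.inr β))
        (by
          intro r s
          beta_reduce
          rw [B1_swap n r s, B2_swap n r s, B3_swap n r s, B4_swap n r s]
          simp only [Matrix.mul_neg, Matrix.neg_apply, neg_mul_neg])
        (by
          intro r
          beta_reduce
          rw [B1_diag n r, B2_diag n r, B3_diag n r, B4_diag n r]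
          simp only [Matrix.mul_zero, Matrix.zero_apply, zero_mul, Matrix.mul_smul,
            Matrix.smul_apply, smul_eq_mul, hq2]
          ring)
      rw [e1]
      simp only [qB1_inr, qB2_inr, qB3_inr, qB4_inr, hp1, hp2, hp3, hp4, hp5, hp6]
      simp only [mul_sub, sub_mul, mul_add, add_mul, mul_ite, ite_mul, mul_zero, zero_mul,
        mul_one, neg_mul, mul_neg, neg_neg, neg_zero, ite_self, neg_add, neg_sub,
        Finset.sum_add_distrib, Finset.sum_sub_distrib, Finset.sum_neg_distrib,
        Finset.sum_ite_irrel, Finset.sum_ite_eq', Finset.sum_ite_eq, Finset.mem_univ, if_true,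
        Finset.sum_const_zero]
      split_ifs with h <;> ring
    · simp only [kappaSp]
      have e1 := half_sum
        (f := fun r s => (q * B1 n r s) (Sum.inl j) (Sum.inl α) * (q * B1 n r s) (Sum.inl k) (Sum.inr β)
          + (q * B2 n r s) (Sum.inl j) (Sum.inl α) * (q * B2 n r s) (Sum.inl k) (Sum.inr β)
          + (q * B3 n r s) (Sum.inl j) (Sum.inl α) * (q * B3 n r s) (Sum.inl k) (Sum.inr β)
          + (q * B4 n r s) (Sum.inl j) (Sum.inl α) * (q * B4 n r s) (Sum.inl k) (Sum.inr β))
        (g := fun r => (q * C1 n r) (Sum.inl j) (Sum.inl α) * (q * C1 n r) (Sum.inl k) (Sum.inr β)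
          + (q * C2 n r) (Sum.inl j) (Sum.inl α) * (q * C2 n r) (Sum.inl k) (Sum.inr β)
          + (q * C3 n r) (Sum.inl j) (Sum.inl α) * (q * C3 n r) (Sum.inl k) (Sum.inr β))
        (by
          intro r s
          beta_reduce
          rw [B1_swap n r s, B2_swap n r s, B3_swap n r s, B4_swap n r s]
          simp only [Matrix.mul_neg, Matrix.neg_apply, neg_mul_neg])
        (by
          intro r
          beta_reduce
          rw [B1_diag n r, B2_diag n r, B3_diag n r, B4_diag n r]
          simp only [Matrix.mul_zero, Matrix.zero_apply, zero_mul, Matrix.mul_smul,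
            Matrix.smul_apply, smul_eq_mul, hq2]
          ring)
      rw [e1]
      simp only [qB1_inl, qB1_inr, qB2_inl, qB2_inr, qB3_inl, qB3_inr, qB4_inl, qB4_inr,
        hp1, hp2, hp3, hp4, hp5, hp6]
      simp only [mul_sub, sub_mul, mul_add, add_mul, mul_ite, ite_mul, mul_zero, zero_mul,
        mul_one, neg_mul, mul_neg, neg_neg, neg_zero, ite_self, neg_add, neg_sub,
        Finset.sum_add_distrib, Finset.sum_sub_distrib, Finset.sum_neg_distrib,
        Finset.sum_ite_irrel, Finset.sum_ite_eq', Finset.sum_ite_eq, Finset.mem_univ, if_true,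
        Finset.sum_const_zero]
      split_ifs with h
      · rw [show (∑ x : Fin n, 4⁻¹ * (q (Sum.inl j) (Sum.inl x) * q (Sum.inl k) (Sum.inr x)))
            = 4⁻¹ * ∑ a : Fin n, q (Sum.inl j) (Sum.inl a) * q (Sum.inl k) (Sum.inr a) from
            (Finset.mul_sum _ _ _).symm, horth, Finset.mul_sum]
        ring
      · ring
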